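/- Let T be a rooted binary tree of depth D in which, independently for each of k items, the item follows a uniformly random root-to-leaf path (choosing left/right uniformly at each level). A node is 'heavy' if at least 2 items' paths pass through it. Then the expected number of heavy nodes in T is O(k), independent of D. -/
import Mathlib

open Finset

/-- Number of heavy nodes at level `i` (prefixes through which ≥ 2 items pass). -/
def heavyCount (D k i : ℕ) (hi : i ≤ D) (f : Fin k → Fin D → Bool) : ℕ :=
  ((Finset.univ : Finset (Fin i → Bool)).filter
    (fun p => 2 ≤ (Finset.univ.filter
      (fun j : Fin k => ∀ t : Fin i,
        f j ⟨(t : ℕ), lt_of_lt_of_le t.isLt hi⟩ = p t)).card)).card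

/-- Total-level version without the side condition. -/
def hc (D k n : ℕ) (f : Fin k → Fin D → Bool) : ℕ :=
  if h : n ≤ D then heavyCount D k n h f else 0

lemma two_mul_heavy_le_pairs (D k i : ℕ) (hi : i ≤ D) (f : Fin k → Fin D → Bool) :
    2 * heavyCount D k i hi f ≤
      ((Finset.univ : Finset (Fin k)).offDiag.filter
        (fun q : Fin k × Fin k => ∀ t : Fin i,
          f q.1 ⟨(t : ℕ), lt_of_lt_of_le t.isLt hi⟩
            = f q.2 ⟨(t : ℕ), lt_of_lt_of_le t.isLt hi⟩)).card := by
  classical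
  set Pairs := ((Finset.univ : Finset (Fin k)).offDiag.filter
      (fun q : Fin k × Fin k => ∀ t : Fin i,
        f q.1 ⟨(t : ℕ), lt_of_lt_of_le t.isLt hi⟩
          = f q.2 ⟨(t : ℕ), lt_of_lt_of_le t.isLt hi⟩)) with hPairs
  have hfib : Pairs.card = ∑ p : Fin i → Bool,
      (Pairs.filter (fun q => (fun t : Fin i =>
        f q.1 ⟨(t : ℕ), lt_of_lt_of_le t.isLt hi⟩) = p)).card := by
    exact Finset.card_eq_sum_card_fiberwise (fun q _ => Finset.mem_univ _)
  rw [hfib]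
  have : 2 * heavyCount D k i hi f =
      ∑ p ∈ ((Finset.univ : Finset (Fin i → Bool)).filter
        (fun p => 2 ≤ (Finset.univ.filter
          (fun j : Fin k => ∀ t : Fin i,
            f j ⟨(t : ℕ), lt_of_lt_of_le t.isLt hi⟩ = p t)).card)), 2 := by
    rw [Finset.sum_const, heavyCount]; ring
  rw [this]
  have step1 : ∀ p ∈ ((Finset.univ : Finset (Fin i → Bool)).filter
        (fun p => 2 ≤ (Finset.univ.filter
          (fun j : Fin k => ∀ t : Fin i,
            f j ⟨(t : ℕ), lt_of_lt_of_le t.isLt hi⟩ = p t)).card)),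
      2 ≤ (Pairs.filter (fun q => (fun t : Fin i =>
        f q.1 ⟨(t : ℕ), lt_of_lt_of_le t.isLt hi⟩) = p)).card := by
    intro p hp
    rw [Finset.mem_filter] at hp
    set s := (Finset.univ.filter (fun j : Fin k => ∀ t : Fin i,
      f j ⟨(t : ℕ), lt_of_lt_of_le t.isLt hi⟩ = p t)) with hs
    have hsub : s.offDiag ⊆ Pairs.filter (fun q => (fun t : Fin i =>
        f q.1 ⟨(t : ℕ), lt_of_lt_of_le t.isLt hi⟩) = p) := by
      intro q hq
      rw [Finset.mem_offDiag] at hq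
      obtain ⟨h1, h2, h3⟩ := hq
      rw [hs, Finset.mem_filter] at h1 h2
      rw [Finset.mem_filter, hPairs, Finset.mem_filter, Finset.mem_offDiag]
      refine ⟨⟨⟨Finset.mem_univ _, Finset.mem_univ _, h3⟩, fun t => ?_⟩, ?_⟩
      · rw [h1.2 t, h2.2 t]
      · funext t; exact h1.2 t
    have hcard : 2 ≤ s.card := hp.2
    have : 2 ≤ s.offDiag.card := by
      rw [Finset.offDiag_card]
      obtain ⟨c, hc⟩ : ∃ c, s.card = c := ⟨_, rfl⟩
      rw [hc] at hcard ⊢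
      have h2 : c + c ≤ c * c := by
        have := Nat.mul_le_mul_right c hcard
        linarith
      exact hcard.trans (Nat.le_sub_of_add_le h2)
    exact this.trans (Finset.card_le_card hsub)
  calc ∑ p ∈ ((Finset.univ : Finset (Fin i → Bool)).filter
        (fun p => 2 ≤ (Finset.univ.filter
          (fun j : Fin k => ∀ t : Fin i,
            f j ⟨(t : ℕ), lt_of_lt_of_le t.isLt hi⟩ = p t)).card)), 2
      ≤ ∑ p ∈ ((Finset.univ : Finset (Fin i → Bool)).filter
        (fun p => 2 ≤ (Finset.univ.filter
          (fun j : Fin k => ∀ t : Fin i,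
            f j ⟨(t : ℕ), lt_of_lt_of_le t.isLt hi⟩ = p t)).card)),
        (Pairs.filter (fun q => (fun t : Fin i =>
          f q.1 ⟨(t : ℕ), lt_of_lt_of_le t.isLt hi⟩) = p)).card :=
      Finset.sum_le_sum step1
    _ ≤ ∑ p : Fin i → Bool, (Pairs.filter (fun q => (fun t : Fin i =>
          f q.1 ⟨(t : ℕ), lt_of_lt_of_le t.isLt hi⟩) = p)).card :=
      Finset.sum_le_sum_of_subset_of_nonneg (Finset.filter_subset _ _)
        (fun _ _ _ => Nat.zero_le _)

lemma pair_filter_card (D k i : ℕ) (hi : i ≤ D) {j j' : Fin k} (hjj : j ≠ j') :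
    (Finset.univ.filter (fun f : Fin k → Fin D → Bool => ∀ t : Fin i,
      f j ⟨(t : ℕ), lt_of_lt_of_le t.isLt hi⟩
        = f j' ⟨(t : ℕ), lt_of_lt_of_le t.isLt hi⟩)).card * 2 ^ i
      ≤ Fintype.card (Fin k → Fin D → Bool) := by
  classical
  set s := (Finset.univ.filter (fun f : Fin k → Fin D → Bool => ∀ t : Fin i,
      f j ⟨(t : ℕ), lt_of_lt_of_le t.isLt hi⟩
        = f j' ⟨(t : ℕ), lt_of_lt_of_le t.isLt hi⟩)) with hs
  have hcard : s.card * 2 ^ i = (s ×ˢ (Finset.univ : Finset (Fin i → Bool))).card := by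
    rw [Finset.card_product, Finset.card_univ]
    simp
  rw [hcard, ← Finset.card_univ]
  set φ : (Fin k → Fin D → Bool) × (Fin i → Bool) → (Fin k → Fin D → Bool) :=
    fun x => Function.update x.1 j
      (fun u : Fin D => if h : (u : ℕ) < i then x.2 ⟨u, h⟩ else x.1 j u) with hφ
  refine Finset.card_le_card_of_injOn φ (fun _ _ => Finset.mem_univ _) ?_
  intro x hx y hy hxy
  rw [Finset.mem_coe, Finset.mem_product, hs, Finset.mem_filter] at hx hy
  have hxc := hx.1.2
  have hyc := hy.1.2
  have hj : ∀ u : Fin D, φ x j u = φ y j u := fun u => congrFun (congrFun hxy j) u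
  have hne : ∀ j'' : Fin k, j'' ≠ j → x.1 j'' = y.1 j'' := by
    intro j'' h
    have := congrFun hxy j''
    simp only [hφ, Function.update_of_ne h] at this
    exact this
  have h2 : x.2 = y.2 := by
    funext t
    have := hj ⟨(t : ℕ), lt_of_lt_of_le t.isLt hi⟩
    rw [hφ] at this
    simp only [Function.update_self] at this
    rw [dif_pos t.isLt, dif_pos t.isLt] at this
    simpa using this
  have h1 : x.1 = y.1 := by
    funext j'' u
    by_cases hj'' : j'' = j
    · subst hj''
      by_cases hu : (u : ℕ) < i
      · have hx' := hxc ⟨(u : ℕ), hu⟩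
        have hy' := hyc ⟨(u : ℕ), hu⟩
        have hju' : x.1 j' = y.1 j' := hne j' (Ne.symm hjj)
        have hueq : (⟨((⟨(u : ℕ), hu⟩ : Fin i) : ℕ), lt_of_lt_of_le (⟨(u : ℕ), hu⟩ : Fin i).isLt hi⟩ : Fin D) = u := by
          ext; rfl
        rw [hueq] at hx' hy'
        rw [hx', hy', hju']
      · have := hj u
        rw [hφ] at this
        simp only [Function.update_self] at this
        rw [dif_neg hu, dif_neg hu] at this
        exact this
    · exact congrFun (hne j'' hj'') u
  exact Prod.ext h1 h2

lemma sum_hc_le_pow (D k n : ℕ) :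
    ∑ f : Fin k → Fin D → Bool, hc D k n f
      ≤ 2 ^ n * Fintype.card (Fin k → Fin D → Bool) := by
  classical
  have h : ∀ f : Fin k → Fin D → Bool, hc D k n f ≤ 2 ^ n := by
    intro f
    rw [hc]
    split
    · calc heavyCount D k n _ f ≤ (Finset.univ : Finset (Fin n → Bool)).card :=
            Finset.card_filter_le _ _
        _ = 2 ^ n := by simp
    · exact Nat.zero_le _
  calc ∑ f : Fin k → Fin D → Bool, hc D k n f
      ≤ ∑ _f : Fin k → Fin D → Bool, 2 ^ n := Finset.sum_le_sum (fun f _ => h f)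
    _ = Fintype.card (Fin k → Fin D → Bool) * 2 ^ n := by
        rw [Finset.sum_const, Finset.card_univ, smul_eq_mul]
    _ = 2 ^ n * Fintype.card (Fin k → Fin D → Bool) := mul_comm _ _

lemma sum_hc_le_sq (D k n : ℕ) :
    2 * 2 ^ n * ∑ f : Fin k → Fin D → Bool, hc D k n f
      ≤ k ^ 2 * Fintype.card (Fin k → Fin D → Bool) := by
  classical
  by_cases h : n ≤ D
  · have e1 : ∀ f : Fin k → Fin D → Bool, hc D k n f = heavyCount D k n h f := by
      intro f; rw [hc, dif_pos h]
    have step1 : 2 * ∑ f : Fin k → Fin D → Bool, hc D k n f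
        ≤ ∑ f : Fin k → Fin D → Bool,
            ((Finset.univ : Finset (Fin k)).offDiag.filter
              (fun q : Fin k × Fin k => ∀ t : Fin n,
                f q.1 ⟨(t : ℕ), lt_of_lt_of_le t.isLt h⟩
                  = f q.2 ⟨(t : ℕ), lt_of_lt_of_le t.isLt h⟩)).card := by
      rw [Finset.mul_sum]
      refine Finset.sum_le_sum (fun f _ => ?_)
      rw [e1 f]
      exact two_mul_heavy_le_pairs D k n h f
    have swap : ∑ f : Fin k → Fin D → Bool,
          ((Finset.univ : Finset (Fin k)).offDiag.filter
            (fun q : Fin k × Fin k => ∀ t : Fin n,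
              f q.1 ⟨(t : ℕ), lt_of_lt_of_le t.isLt h⟩
                = f q.2 ⟨(t : ℕ), lt_of_lt_of_le t.isLt h⟩)).card
        = ∑ q ∈ (Finset.univ : Finset (Fin k)).offDiag,
            (Finset.univ.filter (fun f : Fin k → Fin D → Bool => ∀ t : Fin n,
              f q.1 ⟨(t : ℕ), lt_of_lt_of_le t.isLt h⟩
                = f q.2 ⟨(t : ℕ), lt_of_lt_of_le t.isLt h⟩)).card := by
      simp_rw [Finset.card_filter]
      exact Finset.sum_comm
    have step2 : (∑ q ∈ (Finset.univ : Finset (Fin k)).offDiag,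
          (Finset.univ.filter (fun f : Fin k → Fin D → Bool => ∀ t : Fin n,
            f q.1 ⟨(t : ℕ), lt_of_lt_of_le t.isLt h⟩
              = f q.2 ⟨(t : ℕ), lt_of_lt_of_le t.isLt h⟩)).card) * 2 ^ n
        ≤ k ^ 2 * Fintype.card (Fin k → Fin D → Bool) := by
      rw [Finset.sum_mul]
      calc ∑ q ∈ (Finset.univ : Finset (Fin k)).offDiag,
            (Finset.univ.filter (fun f : Fin k → Fin D → Bool => ∀ t : Fin n,
              f q.1 ⟨(t : ℕ), lt_of_lt_of_le t.isLt h⟩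
                = f q.2 ⟨(t : ℕ), lt_of_lt_of_le t.isLt h⟩)).card * 2 ^ n
          ≤ ∑ _q ∈ (Finset.univ : Finset (Fin k)).offDiag,
              Fintype.card (Fin k → Fin D → Bool) := by
            refine Finset.sum_le_sum (fun q hq => ?_)
            rw [Finset.mem_offDiag] at hq
            exact pair_filter_card D k n h hq.2.2
        _ = (Finset.univ : Finset (Fin k)).offDiag.card
              * Fintype.card (Fin k → Fin D → Bool) := by
            rw [Finset.sum_const, smul_eq_mul]
        _ ≤ k ^ 2 * Fintype.card (Fin k → Fin D → Bool) := by
            refine Nat.mul_le_mul_right _ ?_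
            rw [Finset.offDiag_card, Finset.card_univ, Fintype.card_fin]
            calc k * k - k ≤ k * k := Nat.sub_le _ _
              _ = k ^ 2 := (sq k).symm
    calc 2 * 2 ^ n * ∑ f : Fin k → Fin D → Bool, hc D k n f
        = (2 * ∑ f : Fin k → Fin D → Bool, hc D k n f) * 2 ^ n := by ring
      _ ≤ (∑ q ∈ (Finset.univ : Finset (Fin k)).offDiag,
            (Finset.univ.filter (fun f : Fin k → Fin D → Bool => ∀ t : Fin n,
              f q.1 ⟨(t : ℕ), lt_of_lt_of_le t.isLt h⟩
                = f q.2 ⟨(t : ℕ), lt_of_lt_of_le t.isLt h⟩)).card) * 2 ^ n := by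
          refine Nat.mul_le_mul_right _ ?_
          rw [← swap]; exact step1
      _ ≤ k ^ 2 * Fintype.card (Fin k → Fin D → Bool) := step2
  · have : ∀ f : Fin k → Fin D → Bool, hc D k n f = 0 := by
      intro f; rw [hc, dif_neg h]
    simp [this]

lemma clog_pow_le (k : ℕ) : 2 ^ Nat.clog 2 k ≤ 2 * k + 1 := by
  rcases Nat.lt_or_ge k 2 with hk | hk
  · interval_cases k <;> simp [Nat.clog_zero_right, Nat.clog_one_right]
  · have h1 : 2 ^ (Nat.clog 2 k - 1) < k :=
      Nat.pow_pred_clog_lt_self (by norm_num) (by omega)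
    have h2 : 0 < Nat.clog 2 k := Nat.clog_pos (by norm_num) hk
    have h3 : 2 ^ Nat.clog 2 k = 2 * 2 ^ (Nat.clog 2 k - 1) := by
      conv_lhs => rw [← Nat.succ_pred_eq_of_pos h2]
      rw [pow_succ, Nat.pred_eq_sub_one]
      ring
    omega

theorem expected_heavy_nodes_linear :
    ∃ C : ℝ, 0 < C ∧ ∀ D k : ℕ,
      (∑ f : Fin k → Fin D → Bool,
          ((∑ i : Fin (D + 1),
              ((Finset.univ : Finset (Fin (i : ℕ) → Bool)).filter
                (fun p => 2 ≤ (Finset.univ.filter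
                  (fun j : Fin k => ∀ t : Fin (i : ℕ),
                    f j ⟨(t : ℕ), lt_of_lt_of_le t.isLt (Nat.lt_succ_iff.mp i.isLt)⟩
                      = p t)).card)).card) : ℝ))
        / (Fintype.card (Fin k → Fin D → Bool) : ℝ)
      ≤ C * k := by
  classical
  refine ⟨4, by norm_num, fun D k => ?_⟩
  have hP : (0:ℝ) < (Fintype.card (Fin k → Fin D → Bool) : ℝ) := by
    exact_mod_cast (Fintype.card_pos : 0 < Fintype.card (Fin k → Fin D → Bool))
  set P : ℝ := (Fintype.card (Fin k → Fin D → Bool) : ℝ) with hPdef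
  rw [div_le_iff₀ hP]
  set g : ℕ → ℝ := fun n => ((∑ f : Fin k → Fin D → Bool, hc D k n f : ℕ) : ℝ) with hg
  have hterm : ∀ (f : Fin k → Fin D → Bool) (i : Fin (D+1)),
      ((Finset.univ : Finset (Fin (i : ℕ) → Bool)).filter
        (fun p => 2 ≤ (Finset.univ.filter
          (fun j : Fin k => ∀ t : Fin (i : ℕ),
            f j ⟨(t : ℕ), lt_of_lt_of_le t.isLt (Nat.lt_succ_iff.mp i.isLt)⟩
              = p t)).card)).card = hc D k (i : ℕ) f := by
    intro f i
    rw [hc, dif_pos (Nat.lt_succ_iff.mp i.isLt)]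
    rfl
  have hnum : (∑ f : Fin k → Fin D → Bool,
      ((∑ i : Fin (D + 1),
          ((Finset.univ : Finset (Fin (i : ℕ) → Bool)).filter
            (fun p => 2 ≤ (Finset.univ.filter
              (fun j : Fin k => ∀ t : Fin (i : ℕ),
                f j ⟨(t : ℕ), lt_of_lt_of_le t.isLt (Nat.lt_succ_iff.mp i.isLt)⟩
                  = p t)).card)).card) : ℝ))
      = ∑ n ∈ Finset.range (D+1), g n := by
    have e1 : ∀ f : Fin k → Fin D → Bool,
        (∑ i : Fin (D + 1),
          (((Finset.univ : Finset (Fin (i : ℕ) → Bool)).filter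
            (fun p => 2 ≤ (Finset.univ.filter
              (fun j : Fin k => ∀ t : Fin (i : ℕ),
                f j ⟨(t : ℕ), lt_of_lt_of_le t.isLt (Nat.lt_succ_iff.mp i.isLt)⟩
                  = p t)).card)).card : ℝ))
        = ∑ n ∈ Finset.range (D+1), ((hc D k n f : ℕ) : ℝ) := by
      intro f
      rw [← Fin.sum_univ_eq_sum_range (fun n => ((hc D k n f : ℕ) : ℝ)) (D+1)]
      exact Finset.sum_congr rfl (fun i _ => by rw [hterm f i])
    calc (∑ f : Fin k → Fin D → Bool,
          ((∑ i : Fin (D + 1),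
            ((Finset.univ : Finset (Fin (i : ℕ) → Bool)).filter
              (fun p => 2 ≤ (Finset.univ.filter
                (fun j : Fin k => ∀ t : Fin (i : ℕ),
                  f j ⟨(t : ℕ), lt_of_lt_of_le t.isLt (Nat.lt_succ_iff.mp i.isLt)⟩
                    = p t)).card)).card) : ℝ))
        = ∑ f : Fin k → Fin D → Bool,
            ∑ n ∈ Finset.range (D+1), ((hc D k n f : ℕ) : ℝ) :=
          Finset.sum_congr rfl (fun f _ => e1 f)
      _ = ∑ n ∈ Finset.range (D+1),
            ∑ f : Fin k → Fin D → Bool, ((hc D k n f : ℕ) : ℝ) := Finset.sum_comm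
      _ = ∑ n ∈ Finset.range (D+1), g n := by
          refine Finset.sum_congr rfl (fun n _ => ?_)
          simp only [hg]
          push_cast
          rfl
  rw [hnum]
  have gnn : ∀ n, 0 ≤ g n := fun n => by simp only [hg]; positivity
  have gb1 : ∀ n, g n ≤ 2 ^ n * P := by
    intro n
    have h' : ((∑ f : Fin k → Fin D → Bool, hc D k n f : ℕ) : ℝ)
        ≤ ((2 ^ n * Fintype.card (Fin k → Fin D → Bool) : ℕ) : ℝ) :=
      Nat.cast_le.mpr (sum_hc_le_pow D k n)
    push_cast at h'
    simpa [hg, hPdef] using h'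
  have gb2 : ∀ n, g n ≤ (k:ℝ) ^ 2 * P / (2 * 2 ^ n) := by
    intro n
    rw [le_div_iff₀ (by positivity)]
    have h' : ((2 * 2 ^ n * ∑ f : Fin k → Fin D → Bool, hc D k n f : ℕ) : ℝ)
        ≤ ((k ^ 2 * Fintype.card (Fin k → Fin D → Bool) : ℕ) : ℝ) :=
      Nat.cast_le.mpr (sum_hc_le_sq D k n)
    push_cast at h'
    simp only [hg, hPdef]
    push_cast
    nlinarith [h']
  set i0 : ℕ := Nat.clog 2 k with hi0
  have hk1 : (k:ℝ) ≤ 2 ^ i0 := by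
    exact_mod_cast Nat.le_pow_clog (by norm_num) k
  have hk2 : (2:ℝ) ^ i0 ≤ 2 * k + 1 := by
    exact_mod_cast clog_pow_le k
  rw [← Finset.sum_filter_add_sum_filter_not (Finset.range (D+1)) (fun n => n < i0) g]
  have partA : ∑ n ∈ (Finset.range (D+1)).filter (fun n => n < i0), g n
      ≤ 2 * k * P := by
    calc ∑ n ∈ (Finset.range (D+1)).filter (fun n => n < i0), g n
        ≤ ∑ n ∈ (Finset.range (D+1)).filter (fun n => n < i0), (2:ℝ) ^ n * P :=
          Finset.sum_le_sum (fun n _ => gb1 n)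
      _ ≤ ∑ n ∈ Finset.range i0, (2:ℝ) ^ n * P := by
          refine Finset.sum_le_sum_of_subset_of_nonneg ?_ (fun n _ _ => by positivity)
          intro x hx
          rw [Finset.mem_filter] at hx
          exact Finset.mem_range.2 hx.2
      _ = (∑ n ∈ Finset.range i0, (2:ℝ) ^ n) * P := by rw [Finset.sum_mul]
      _ = ((2:ℝ) ^ i0 - 1) / (2 - 1) * P := by rw [geom_sum_eq (by norm_num) i0]
      _ ≤ 2 * k * P := by
          refine mul_le_mul_of_nonneg_right ?_ hP.le
          rw [show ((2:ℝ) - 1) = 1 by norm_num, div_one]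
          linarith
  have partB : ∑ n ∈ (Finset.range (D+1)).filter (fun n => ¬ n < i0), g n
      ≤ k * P := by
    have hIco : (Finset.range (D+1)).filter (fun n => ¬ n < i0)
        = Finset.Ico i0 (D+1) := by
      ext x
      simp only [Finset.mem_filter, Finset.mem_range, Finset.mem_Ico, not_lt]
      omega
    rw [hIco]
    have hpos : (0:ℝ) < (2:ℝ) ^ i0 := by positivity
    have h1 : (k:ℝ) ^ 2 * ((1:ℝ)/2) ^ i0 ≤ k := by
      rw [div_pow, one_pow, mul_one_div, div_le_iff₀ hpos]
      have h3 : (k:ℝ) * (k:ℝ) ≤ (k:ℝ) * 2 ^ i0 :=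
        mul_le_mul_of_nonneg_left hk1 (Nat.cast_nonneg k)
      nlinarith
    calc ∑ n ∈ Finset.Ico i0 (D+1), g n
        ≤ ∑ n ∈ Finset.Ico i0 (D+1), (k:ℝ) ^ 2 * P / (2 * 2 ^ n) :=
          Finset.sum_le_sum (fun n _ => gb2 n)
      _ = (k:ℝ) ^ 2 * P / 2 * ∑ n ∈ Finset.Ico i0 (D+1), (1/2:ℝ) ^ n := by
          rw [Finset.mul_sum]
          refine Finset.sum_congr rfl (fun n _ => ?_)
          rw [div_pow, one_pow]
          field_simp
      _ ≤ (k:ℝ) ^ 2 * P / 2 * ((1/2:ℝ) ^ i0 * 2) := by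
          refine mul_le_mul_of_nonneg_left ?_ (by positivity)
          rw [Finset.sum_Ico_eq_sum_range]
          calc ∑ m ∈ Finset.range (D + 1 - i0), (1/2:ℝ) ^ (i0 + m)
              = (1/2:ℝ) ^ i0 * ∑ m ∈ Finset.range (D + 1 - i0), (1/2:ℝ) ^ m := by
                rw [Finset.mul_sum]
                exact Finset.sum_congr rfl (fun m _ => by rw [pow_add])
            _ ≤ (1/2:ℝ) ^ i0 * 2 := by
                refine mul_le_mul_of_nonneg_left ?_ (by positivity)
                exact sum_geometric_two_le _
      _ = (k:ℝ) ^ 2 * ((1:ℝ)/2) ^ i0 * P := by ring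
      _ ≤ k * P := mul_le_mul_of_nonneg_right h1 hP.le
  have hkP : (0:ℝ) ≤ (k:ℝ) * P := by positivity
  calc (∑ n ∈ (Finset.range (D+1)).filter (fun n => n < i0), g n)
        + ∑ n ∈ (Finset.range (D+1)).filter (fun n => ¬ n < i0), g n
      ≤ 2 * k * P + k * P := add_le_add partA partB
    _ ≤ 4 * k * P := by nlinarith [hkP]
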